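/- arXiv:2212.14171 — 2 statements merged into one kernel-verified Lean document; each statement's English description precedes it below -/
import Mathlib

section
/- With notation as before, if z ⊆* v ⊆* t (almost containment of subsets of ℕ), then μ_{t}(pinf(z)) ≤ μ_{v}(pinf(z)), where pinf(z) = { x : x ∩ I_π(n) ⊆ z ∩ I_π(n) for infinitely many n } and μ_t is the partition product measure associated to t. -/
open Set MeasureTheory Filter
open scoped ENNReal

noncomputable instance : MeasurableSpace (Set ℕ) := ⊤

/-- `a ⊆* b` : almost containment of subsets of ℕ. -/
def ASub (a b : Set ℕ) : Prop := (a \ b).Finite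

/-- The `n`-th interval `I_π(n) = [π n, π (n+1))` of the partition function `π`. -/
def Iblk (π : ℕ → ℕ) (n : ℕ) : Set ℕ := Set.Ico (π n) (π (n + 1))

/-- The factor probability `ν_{I_π(n), a}` : the uniform probability measure on
subsets of `a ∩ I_π(n)`, given by counting. -/
noncomputable def nuFun (a : Set ℕ) (π : ℕ → ℕ) (n : ℕ) (U : Set (Set ℕ)) : ℝ≥0∞ :=
  ({s : Set ℕ | s ⊆ a ∩ Iblk π n ∧ s ∈ U}.ncard : ℝ≥0∞) / 2 ^ (a ∩ Iblk π n).ncard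

/-- `pinf(z) = {x : x(n) ∩ I_π(n) ⊆ z ∩ I_π(n) for infinitely many n}`. -/
def pinfSet (π : ℕ → ℕ) (z : Set ℕ) : Set (ℕ → Set ℕ) :=
  {x | ∃ᶠ n in atTop, x n ∩ Iblk π n ⊆ z ∩ Iblk π n}

/-! ### Auxiliary definitions -/

/-- The "bad" event in coordinate `n`. -/
def Cblk (π : ℕ → ℕ) (z : Set ℕ) (n : ℕ) : Set (Set ℕ) :=
  {s | ¬ s ∩ Iblk π n ⊆ z ∩ Iblk π n}

/-- Cylinder choice for the product formula. -/
def Ucyl (π : ℕ → ℕ) (z : Set ℕ) (m k : ℕ) : Set (Set ℕ) :=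
  if k < m then Set.univ else Cblk π z k

/-- Finite cylinder event: bad on all coordinates in `[m, M)`. -/
def Dset (π : ℕ → ℕ) (z : Set ℕ) (m M : ℕ) : Set (ℕ → Set ℕ) :=
  {x | ∀ k < M, x k ∈ Ucyl π z m k}

/-- Tail event: bad on all coordinates `≥ m`. -/
def Eset (π : ℕ → ℕ) (z : Set ℕ) (m : ℕ) : Set (ℕ → Set ℕ) :=
  {x | ∀ k, m ≤ k → x k ∈ Cblk π z k}

lemma Iblk_finite (π : ℕ → ℕ) (n : ℕ) : (Iblk π n).Finite := Set.finite_Ico _ _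

lemma ncard_subsets (F : Set ℕ) (hF : F.Finite) :
    {s : Set ℕ | s ⊆ F}.ncard = 2 ^ F.ncard := by
  have himg : {s : Set ℕ | s ⊆ F} = (↑) '' (hF.toFinset.powerset : Set (Finset ℕ)) := by
    ext s
    constructor
    · intro hs
      refine ⟨(hF.subset hs).toFinset, ?_, (hF.subset hs).coe_toFinset⟩
      simp only [Finset.mem_coe, Finset.mem_powerset]
      intro i hi
      simp only [Set.Finite.mem_toFinset] at hi ⊢
      exact hs hi
    · rintro ⟨u, hu, rfl⟩
      simp only [Finset.mem_coe, Finset.mem_powerset] at hu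
      intro i hi
      have := hu (by simpa using hi)
      simpa using this
  rw [himg, Set.ncard_image_of_injective _ Finset.coe_injective, Set.ncard_coe_finset,
    Finset.card_powerset, Set.ncard_eq_toFinset_card F hF]

lemma nuFun_univ (a : Set ℕ) (π : ℕ → ℕ) (n : ℕ) : nuFun a π n Set.univ = 1 := by
  have hF : (a ∩ Iblk π n).Finite := (Iblk_finite π n).inter_of_right a
  have h1 : {s : Set ℕ | s ⊆ a ∩ Iblk π n ∧ s ∈ (Set.univ : Set (Set ℕ))}
      = {s : Set ℕ | s ⊆ a ∩ Iblk π n} := by ext s; simp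
  rw [nuFun, h1, ncard_subsets _ hF]
  push_cast
  exact ENNReal.div_self (by positivity) (ENNReal.pow_ne_top (by norm_num))

lemma nuFun_Cblk (a z : Set ℕ) (π : ℕ → ℕ) (n : ℕ)
    (hza : z ∩ Iblk π n ⊆ a ∩ Iblk π n) :
    nuFun a π n (Cblk π z n)
      = ((2 ^ (a ∩ Iblk π n).ncard - 2 ^ (z ∩ Iblk π n).ncard : ℕ) : ℝ≥0∞)
        / 2 ^ (a ∩ Iblk π n).ncard := by
  have hF : (a ∩ Iblk π n).Finite := (Iblk_finite π n).inter_of_right a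
  have hG : (z ∩ Iblk π n).Finite := (Iblk_finite π n).inter_of_right z
  have hset : {s : Set ℕ | s ⊆ a ∩ Iblk π n ∧ s ∈ Cblk π z n}
      = {s : Set ℕ | s ⊆ a ∩ Iblk π n} \ {s : Set ℕ | s ⊆ z ∩ Iblk π n} := by
    ext s
    simp only [Cblk, Set.mem_setOf_eq, Set.mem_diff]
    constructor
    · rintro ⟨h1, h2⟩
      refine ⟨h1, fun hc => h2 ?_⟩
      intro i hi
      exact hc hi.1
    · rintro ⟨h1, h2⟩
      refine ⟨h1, fun hc => h2 ?_⟩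
      intro i hi
      have hiI : i ∈ Iblk π n := (h1 hi).2
      exact hc ⟨hi, hiI⟩
  have hsub : {s : Set ℕ | s ⊆ z ∩ Iblk π n} ⊆ {s : Set ℕ | s ⊆ a ∩ Iblk π n} :=
    fun s hs => hs.trans hza
  rw [nuFun, hset, Set.ncard_diff hsub (hG.finite_subsets), ncard_subsets _ hF,
    ncard_subsets _ hG]

lemma div_compare {j kv kt : ℕ} (hjv : j ≤ kv) (hvt : kv ≤ kt) :
    ((2 ^ kv - 2 ^ j : ℕ) : ℝ≥0∞) / 2 ^ kv ≤ ((2 ^ kt - 2 ^ j : ℕ) : ℝ≥0∞) / 2 ^ kt := by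
  have h2v : (2 : ℕ) ^ j ≤ 2 ^ kv := Nat.pow_le_pow_right (by norm_num) hjv
  have h2t : (2 : ℕ) ^ j ≤ 2 ^ kt := Nat.pow_le_pow_right (by norm_num) (hjv.trans hvt)
  rw [ENNReal.natCast_sub, ENNReal.natCast_sub]
  push_cast
  rw [ENNReal.sub_div (by intro _ _; positivity), ENNReal.sub_div (by intro _ _; positivity),
    ENNReal.div_self (by positivity) (ENNReal.pow_ne_top (by norm_num)),
    ENNReal.div_self (by positivity) (ENNReal.pow_ne_top (by norm_num))]
  gcongr
  · exact one_le_two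

lemma Dset_measurable (π : ℕ → ℕ) (z : Set ℕ) (m M : ℕ) :
    MeasurableSet (Dset π z m M) := by
  have : Dset π z m M = ⋂ k, ⋂ (_ : k < M), (fun x : ℕ → Set ℕ => x k) ⁻¹' (Ucyl π z m k) := by
    ext x; simp [Dset, Set.mem_iInter]
  rw [this]
  exact MeasurableSet.iInter fun k => MeasurableSet.iInter fun _ =>
    measurable_pi_apply k MeasurableSpace.measurableSet_top

lemma Eset_eq_iInter (π : ℕ → ℕ) (z : Set ℕ) (m : ℕ) :
    Eset π z m = ⋂ M, Dset π z m M := by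
  ext x
  simp only [Eset, Dset, Set.mem_setOf_eq, Set.mem_iInter, Ucyl]
  constructor
  · intro h M k hkM
    by_cases hk : k < m
    · simp [hk]
    · simpa [hk] using h k (le_of_not_gt hk)
  · intro h k hmk
    have := h (k + 1) k (Nat.lt_succ_self k)
    simpa [Nat.not_lt.mpr hmk] using this

lemma Eset_measurable (π : ℕ → ℕ) (z : Set ℕ) (m : ℕ) :
    MeasurableSet (Eset π z m) := by
  rw [Eset_eq_iInter]
  exact MeasurableSet.iInter fun M => Dset_measurable π z m M

lemma compl_pinf (π : ℕ → ℕ) (z : Set ℕ) :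
    (pinfSet π z)ᶜ = ⋃ m, Eset π z m := by
  ext x
  simp only [pinfSet, Set.mem_compl_iff, Set.mem_setOf_eq, Filter.not_frequently,
    eventually_atTop, Set.mem_iUnion, Eset, Cblk, Set.mem_setOf_eq]

/-- measure of the tail event as an infimum of cylinder measures -/
lemma measure_Eset (π : ℕ → ℕ) (z : Set ℕ) (μ : Measure (ℕ → Set ℕ))
    [IsProbabilityMeasure μ] (m : ℕ) :
    μ (Eset π z m) = ⨅ M, μ (Dset π z m M) := by
  rw [Eset_eq_iInter]
  refine Antitone.measure_iInter ?_ (fun M => (Dset_measurable π z m M).nullMeasurableSet)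
    ⟨0, by simp [measure_ne_top]⟩
  intro M M' h x hx k hk
  exact hx k (lt_of_lt_of_le hk h)

/-- If `z ⊆* v ⊆* t` then `μ_t(pinf z) ≤ μ_v(pinf z)`, where `μ_t`, `μ_v` are the
partition product measures associated to `t` and `v`. -/
theorem stmt8 (π : ℕ → ℕ) (hπ0 : π 0 = 0) (hπ : StrictMono π) (z v t : Set ℕ)
    (hzv : ASub z v) (hvt : ASub v t)
    (μt μv : Measure (ℕ → Set ℕ)) [IsProbabilityMeasure μt] [IsProbabilityMeasure μv]
    (hprodt : ∀ (m : ℕ) (U : ℕ → Set (Set ℕ)),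
      μt {x | ∀ k < m, x k ∈ U k} = ∏ k ∈ Finset.range m, nuFun t π k (U k))
    (hprodv : ∀ (m : ℕ) (U : ℕ → Set (Set ℕ)),
      μv {x | ∀ k < m, x k ∈ U k} = ∏ k ∈ Finset.range m, nuFun v π k (U k)) :
    μt (pinfSet π z) ≤ μv (pinfSet π z) := by
  classical
  -- Find N beyond which the blocks are nested
  have hfin : ((z \ v) ∪ (v \ t)).Finite := hzv.union hvt
  obtain ⟨N, hNbd⟩ : ∃ N, ∀ i ∈ (z \ v) ∪ (v \ t), i < N := by
    obtain ⟨B, hB⟩ := hfin.bddAbove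
    exact ⟨B + 1, fun i hi => Nat.lt_succ_of_le (hB hi)⟩
  have hnest : ∀ n, N ≤ n →
      z ∩ Iblk π n ⊆ v ∩ Iblk π n ∧ v ∩ Iblk π n ⊆ t ∩ Iblk π n := by
    intro n hn
    have hbig : ∀ i ∈ Iblk π n, N ≤ i := by
      intro i hi
      have : π n ≤ i := hi.1
      exact le_trans (le_trans hn (hπ.le_apply)) this
    constructor
    · rintro i ⟨hiz, hiI⟩
      refine ⟨?_, hiI⟩
      by_contra hiv
      exact absurd (hNbd i (Or.inl ⟨hiz, hiv⟩)) (not_lt.mpr (hbig i hiI))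
    · rintro i ⟨hiv, hiI⟩
      refine ⟨?_, hiI⟩
      by_contra hit
      exact absurd (hNbd i (Or.inr ⟨hiv, hit⟩)) (not_lt.mpr (hbig i hiI))
  -- coordinatewise comparison of factor probabilities beyond N
  have hfactor : ∀ m, N ≤ m → ∀ k, nuFun v π k (Ucyl π z m k) ≤ nuFun t π k (Ucyl π z m k) := by
    intro m hm k
    by_cases hk : k < m
    · simp [Ucyl, hk, nuFun_univ]
    · have hNk : N ≤ k := le_trans hm (le_of_not_gt hk)
      obtain ⟨hzv', hvt'⟩ := hnest k hNk
      have hzt' : z ∩ Iblk π k ⊆ t ∩ Iblk π k := hzv'.trans hvt'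
      simp only [Ucyl, hk, if_false]
      rw [nuFun_Cblk v z π k hzv', nuFun_Cblk t z π k hzt']
      have hJv : (z ∩ Iblk π k).ncard ≤ (v ∩ Iblk π k).ncard :=
        Set.ncard_le_ncard hzv' ((Iblk_finite π k).inter_of_right v)
      have hVT : (v ∩ Iblk π k).ncard ≤ (t ∩ Iblk π k).ncard :=
        Set.ncard_le_ncard hvt' ((Iblk_finite π k).inter_of_right t)
      exact div_compare hJv hVT
  -- cylinder comparison
  have hcyl : ∀ m, N ≤ m → ∀ M, μv (Dset π z m M) ≤ μt (Dset π z m M) := by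
    intro m hm M
    have ht := hprodt M (Ucyl π z m)
    have hv := hprodv M (Ucyl π z m)
    have hDt : Dset π z m M = {x | ∀ k < M, x k ∈ Ucyl π z m k} := rfl
    rw [hDt, ht, hv]
    exact Finset.prod_le_prod' fun k _ => hfactor m hm k
  -- tail comparison
  have htail : ∀ m, N ≤ m → μv (Eset π z m) ≤ μt (Eset π z m) := by
    intro m hm
    rw [measure_Eset, measure_Eset]
    exact iInf_mono fun M => hcyl m hm M
  -- complement comparison
  have hcompl : μv (pinfSet π z)ᶜ ≤ μt (pinfSet π z)ᶜ := by
    rw [compl_pinf]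
    have hmono : Monotone (Eset π z) := by
      intro m m' hmm' x hx k hk
      exact hx k (le_trans hmm' hk)
    rw [hmono.directed_le.measure_iUnion]
    refine iSup_le fun m => ?_
    calc μv (Eset π z m) ≤ μv (Eset π z (max m N)) :=
          measure_mono (hmono (le_max_left m N))
      _ ≤ μt (Eset π z (max m N)) := htail _ (le_max_right m N)
      _ ≤ μt (⋃ m, Eset π z m) := measure_mono (Set.subset_iUnion _ _)
  -- conclude
  have hmeas : MeasurableSet (pinfSet π z) := by
    have h := (MeasurableSet.iUnion fun m => Eset_measurable π z m).compl
    rwa [← compl_pinf π z, compl_compl] at h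
  have h1 : μt (pinfSet π z) = 1 - μt (pinfSet π z)ᶜ := by
    rw [prob_compl_eq_one_sub hmeas, ENNReal.sub_sub_cancel ENNReal.one_ne_top prob_le_one]
  have h2 : μv (pinfSet π z) = 1 - μv (pinfSet π z)ᶜ := by
    rw [prob_compl_eq_one_sub hmeas, ENNReal.sub_sub_cancel ENNReal.one_ne_top prob_le_one]
  rw [h1, h2]
  exact tsub_le_tsub_left hcompl 1
end

section
/- Let t, u ⊆ ℕ with t ⊆* u, and let μ_t be the partition product measure associated to t over a partition function π. Then the set 𝒫*(u) = { y ⊆ ℕ : y ⊆* u } has μ_t-measure 1. -/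
open Set MeasureTheory Filter
open scoped ENNReal

lemma ncard_powerset_set {F : Set ℕ} (hF : F.Finite) :
    {s : Set ℕ | s ⊆ F}.ncard = 2 ^ F.ncard := by
  have h1 : {s : Set ℕ | s ⊆ F} = (↑) '' (↑hF.toFinset.powerset : Set (Finset ℕ)) := by
    ext s
    simp only [mem_setOf_eq, mem_image, Finset.mem_coe, Finset.mem_powerset]
    constructor
    · intro hs
      have hsf : s.Finite := hF.subset hs
      exact ⟨hsf.toFinset, by simp [Finset.subset_iff, Set.subset_def] at *; tauto, by simp⟩
    · rintro ⟨f, hf, rfl⟩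
      intro x hx
      have := hf hx
      simpa using this
  rw [h1, Set.ncard_image_of_injective _ Finset.coe_injective, Set.ncard_coe_finset,
    Finset.card_powerset, ← Set.ncard_eq_toFinset_card F hF]

lemma nuFun_full (a : Set ℕ) (π : ℕ → ℕ) (n : ℕ) :
    nuFun a π n {s | s ⊆ a ∩ Iblk π n} = 1 := by
  have hfin : (a ∩ Iblk π n).Finite := (Set.finite_Ico _ _).inter_of_right _
  have h1 : {s : Set ℕ | s ⊆ a ∩ Iblk π n ∧ s ∈ {s | s ⊆ a ∩ Iblk π n}} =
      {s : Set ℕ | s ⊆ a ∩ Iblk π n} := by ext s; simp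
  rw [nuFun, h1, ncard_powerset_set hfin]
  push_cast
  exact ENNReal.div_self (by positivity) (ENNReal.pow_ne_top ENNReal.ofNat_ne_top)

/-- If `t ⊆* u` then `𝒫*(u) = {y : y ⊆* u}` has `μ_t`-measure 1, where `μ_t` is
the partition product measure associated to `t`, the space `∏ₙ 𝒫(I_π(n))` being
identified with `𝒫(ℕ)` via `x ↦ ⋃ₙ (x n ∩ I_π(n))`. -/
theorem stmt9 (π : ℕ → ℕ) (hπ0 : π 0 = 0) (hπ : StrictMono π) (t u : Set ℕ)
    (htu : ASub t u)
    (μt : Measure (ℕ → Set ℕ)) [IsProbabilityMeasure μt]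
    (hprodt : ∀ (m : ℕ) (U : ℕ → Set (Set ℕ)),
      μt {x | ∀ k < m, x k ∈ U k} = ∏ k ∈ Finset.range m, nuFun t π k (U k)) :
    μt {x | ASub (⋃ n, x n ∩ Iblk π n) u} = 1 := by
  set U : ℕ → Set (Set ℕ) := fun k => {s | s ⊆ t ∩ Iblk π k} with hU
  set A : Set (ℕ → Set ℕ) := {x | ∀ n, x n ∈ U n} with hA
  have hmeas : ∀ n, MeasurableSet ((fun x : ℕ → Set ℕ => x n) ⁻¹' (U n)ᶜ) :=
    fun n => (measurable_pi_apply n) MeasurableSpace.measurableSet_top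
  have hm : ∀ m, μt {x | ∀ k < m, x k ∈ U k} = 1 := by
    intro m
    rw [hprodt m U]
    exact Finset.prod_eq_one fun k _ => nuFun_full t π k
  have hAc : μt Aᶜ = 0 := by
    have hsub : Aᶜ ⊆ ⋃ n, (fun x : ℕ → Set ℕ => x n) ⁻¹' (U n)ᶜ := by
      intro x hx
      simp only [hA, mem_compl_iff, mem_setOf_eq, not_forall] at hx
      obtain ⟨n, hn⟩ := hx
      exact mem_iUnion.2 ⟨n, hn⟩
    refine measure_mono_null hsub (measure_iUnion_null fun n => ?_)
    have h1 : (fun x : ℕ → Set ℕ => x n) ⁻¹' (U n)ᶜ ⊆ {x | ∀ k < n + 1, x k ∈ U k}ᶜ := by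
      intro x hx hx2
      exact hx (hx2 n (Nat.lt_succ_self n))
    refine measure_mono_null h1 ?_
    have hms : MeasurableSet {x : ℕ → Set ℕ | ∀ k < n + 1, x k ∈ U k} := by
      have : {x : ℕ → Set ℕ | ∀ k < n + 1, x k ∈ U k} =
          ⋂ k ∈ Finset.range (n + 1), (fun x : ℕ → Set ℕ => x k) ⁻¹' U k := by
        ext x; simp [Nat.lt_succ_iff]
      rw [this]
      exact MeasurableSet.biInter (Set.to_countable _)
        fun k _ => (measurable_pi_apply k) MeasurableSpace.measurableSet_top
    rw [measure_compl hms (measure_ne_top _ _), hm (n + 1), measure_univ, tsub_self]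
  have hAm : MeasurableSet A := by
    have : A = (⋃ n, (fun x : ℕ → Set ℕ => x n) ⁻¹' (U n)ᶜ)ᶜ := by
      ext x; simp [hA]
    rw [this]; exact (MeasurableSet.iUnion hmeas).compl
  have hA1 : μt A = 1 := by
    have := measure_add_measure_compl (μ := μt) hAm
    rw [hAc, add_zero, measure_univ] at this
    exact this
  have hsub : A ⊆ {x | ASub (⋃ n, x n ∩ Iblk π n) u} := by
    intro x hx
    have h1 : (⋃ n, x n ∩ Iblk π n) \ u ⊆ t \ u := by
      intro y ⟨hy1, hy2⟩
      obtain ⟨n, hyn, _⟩ := mem_iUnion.1 hy1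
      exact ⟨(hx n hyn).1, hy2⟩
    exact htu.subset h1
  refine le_antisymm (prob_le_one) ?_
  calc (1 : ℝ≥0∞) = μt A := hA1.symm
    _ ≤ _ := measure_mono hsub
end
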